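/- There exists a nonzero constant κ ∈ ℂ such that for every (x_1,x_2) ∈ ℂ² with |x_2| < 1 the series ∑_{s_1=1}^{2} ∑_{s_2=5}^{∞} (s_1−3)(s_2−4)·((s_1+s_2−1)!/((s_1−1)!·(s_2−1)!))·x_1^{s_1}·x_2^{s_2} converges absolutely and equals κ · x_1·x_2^5·(6x_1x_2² − 18x_1x_2 + 3x_2² + 15x_1 − 8x_2 + 5) / (1−x_2)^4. -/

import Mathlib

section helpers
variable {𝕜 : Type*} [RCLike 𝕜]

lemma cast_choose1 (n : ℕ) : (((n+1).choose 1 : ℕ) : 𝕜) = (n:𝕜)+1 := by simp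

lemma cast_choose2 (n : ℕ) : (((n+2).choose 2 : ℕ) : 𝕜) = ((n:𝕜)+1)*((n:𝕜)+2)/2 := by
  have h := Nat.descFactorial_eq_factorial_mul_choose (n+2) 2
  simp [Nat.descFactorial_succ, Nat.descFactorial_zero, Nat.factorial] at h
  have h' := congrArg (Nat.cast : ℕ → 𝕜) h
  push_cast at h'
  rw [eq_div_iff (by norm_num : (2:𝕜) ≠ 0)]
  linear_combination -h'

lemma cast_choose3 (n : ℕ) : (((n+3).choose 3 : ℕ) : 𝕜) = ((n:𝕜)+1)*((n:𝕜)+2)*((n:𝕜)+3)/6 := by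
  have h := Nat.descFactorial_eq_factorial_mul_choose (n+3) 3
  simp [Nat.descFactorial_succ, Nat.descFactorial_zero, Nat.factorial] at h
  have h' := congrArg (Nat.cast : ℕ → 𝕜) h
  push_cast at h'
  rw [eq_div_iff (by norm_num : (6:𝕜) ≠ 0)]
  linear_combination -h'

lemma one_sub_ne {r : 𝕜} (hr : ‖r‖ < 1) : (1:𝕜) - r ≠ 0 := by
  intro h
  have : r = 1 := by linear_combination -h
  rw [this] at hr; simp at hr

lemma rowA {r : 𝕜} (hr : ‖r‖ < 1) :
    HasSum (fun n : ℕ => ((n:𝕜)+1)*((n:𝕜)+5) * r^n) ((5 - 8*r + 3*r^2)/(1-r)^4) := by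
  have h2 := (hasSum_choose_mul_geometric_of_norm_lt_one 2 hr).mul_left (2:𝕜)
  have h1 := (hasSum_choose_mul_geometric_of_norm_lt_one 1 hr).mul_left (3:𝕜)
  have h := h2.add h1
  convert h using 1
  · rfl
  · funext n
    rw [cast_choose2, cast_choose1]
    ring
  · have h0 := one_sub_ne hr
    field_simp
    ring

lemma rowB {r : 𝕜} (hr : ‖r‖ < 1) :
    HasSum (fun n : ℕ => ((n:𝕜)+1)*((n:𝕜)+5)*((n:𝕜)+6) * r^n)
      ((30 - 36*r + 12*r^2)/(1-r)^4) := by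
  have h3 := (hasSum_choose_mul_geometric_of_norm_lt_one 3 hr).mul_left (6:𝕜)
  have h2 := (hasSum_choose_mul_geometric_of_norm_lt_one 2 hr).mul_left (12:𝕜)
  have h1 := (hasSum_choose_mul_geometric_of_norm_lt_one 1 hr).mul_left (12:𝕜)
  have h := (h3.add h2).add h1
  convert h using 1
  · rfl
  · funext n
    rw [cast_choose3, cast_choose2, cast_choose1]
    ring
  · have h0 := one_sub_ne hr
    field_simp
    ring

end helpers

/-- The general term of the hypergeometric series supported in
`S₇ = {(s₁,s₂) : 1 ≤ s₁ ≤ 2, 5 ≤ s₂}` with Ore–Sato coefficient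
`(s₁−3)(s₂−4)Γ(s₁+s₂)/(Γ(s₁)Γ(s₂))`, indexed by `q : Fin 2 × ℕ` via
`s₁ = q.1 + 1`, `s₂ = q.2 + 5`. -/
noncomputable def term18 (x₁ x₂ : ℂ) (q : Fin 2 × ℕ) : ℂ :=
  (((q.1 : ℕ) + 1 : ℂ) - 3) * ((q.2 + 5 : ℂ) - 4) *
    (((((q.1 : ℕ) + 1) + (q.2 + 5) - 1).factorial : ℂ) /
      (((((q.1 : ℕ) + 1) - 1).factorial : ℂ) * (((q.2 + 5) - 1).factorial : ℂ))) *
    x₁ ^ ((q.1 : ℕ) + 1) * x₂ ^ (q.2 + 5)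

lemma term18_zero (x₁ x₂ : ℂ) (n : ℕ) :
    term18 x₁ x₂ (0, n) = (-2) * (((n:ℂ)+1)*((n:ℂ)+5)) * x₁ * x₂^(n+5) := by
  have hfac : ((1 + (n + 5) - 1).factorial : ℂ) = ((n+5 : ℕ) : ℂ) * ((n+4).factorial : ℂ) := by
    rw [show 1 + (n + 5) - 1 = (n+4)+1 by omega, Nat.factorial_succ]
    push_cast; ring
  have hne : ((n+4).factorial : ℂ) ≠ 0 := Nat.cast_ne_zero.mpr (Nat.factorial_ne_zero _)
  simp only [term18, Fin.val_zero, Nat.cast_zero, show (n + 5 - 1) = n + 4 by omega,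
    show (0 + 1 - 1) = 0 by omega, Nat.factorial_zero, Nat.cast_one, one_mul, hfac]
  field_simp
  push_cast
  ring

lemma term18_one (x₁ x₂ : ℂ) (n : ℕ) :
    term18 x₁ x₂ (1, n) = (-1) * (((n:ℂ)+1)*((n:ℂ)+5)*((n:ℂ)+6)) * x₁^2 * x₂^(n+5) := by
  have hfac : ((2 + (n + 5) - 1).factorial : ℂ)
      = ((n+6 : ℕ) : ℂ) * (((n+5 : ℕ) : ℂ) * ((n+4).factorial : ℂ)) := by
    rw [show 2 + (n + 5) - 1 = ((n+4)+1)+1 by omega, Nat.factorial_succ, Nat.factorial_succ]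
    push_cast; ring
  have hne : ((n+4).factorial : ℂ) ≠ 0 := Nat.cast_ne_zero.mpr (Nat.factorial_ne_zero _)
  simp only [term18, Fin.val_one, Nat.cast_one, show (n + 5 - 1) = n + 4 by omega,
    show (1 + 1 - 1) = 1 by omega, Nat.factorial_one, Nat.cast_one, one_mul, hfac]
  field_simp
  push_cast
  ring

/-- The series solution of the Horn system supported in `S₇` sums, up to a nonzero
constant factor, to the rational function `y₇`. -/
theorem stmt18 :
    ∃ κ : ℂ, κ ≠ 0 ∧ ∀ x₁ x₂ : ℂ, ‖x₂‖ < 1 →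
      Summable (fun q : Fin 2 × ℕ => ‖term18 x₁ x₂ q‖) ∧
      HasSum (term18 x₁ x₂)
        (κ * x₁ * x₂ ^ 5 *
          (6 * x₁ * x₂ ^ 2 - 18 * x₁ * x₂ + 3 * x₂ ^ 2 + 15 * x₁ - 8 * x₂ + 5) /
          (1 - x₂) ^ 4) := by
  refine ⟨-2, by norm_num, fun x₁ x₂ hx => ?_⟩
  have hx' : ‖x₂‖ < 1 := by exact hx
  have hxr : ‖(‖x₂‖ : ℝ)‖ < 1 := by
    rwa [Real.norm_eq_abs, abs_of_nonneg (norm_nonneg _)]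
  set a : ℝ := ‖x₂‖ with ha
  -- complex row sums
  have h0 : HasSum (fun n : ℕ => term18 x₁ x₂ (0, n))
      ((-2*x₁*x₂^5) * ((5 - 8*x₂ + 3*x₂^2)/(1-x₂)^4)) := by
    have := (rowA hx').mul_left (-2*x₁*x₂^5)
    convert this using 1
    rfl
    funext n
    rw [term18_zero, pow_add]
    ring
  have h1 : HasSum (fun n : ℕ => term18 x₁ x₂ (1, n))
      ((-x₁^2*x₂^5) * ((30 - 36*x₂ + 12*x₂^2)/(1-x₂)^4)) := by
    have := (rowB hx').mul_left (-x₁^2*x₂^5)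
    convert this using 1
    rfl
    funext n
    rw [term18_one, pow_add]
    ring
  -- absolute values of rows
  have habs0 : ∀ n : ℕ, ‖term18 x₁ x₂ (0, n)‖
      = (2 * ‖x₁‖ * a^5) * (((n:ℝ)+1)*((n:ℝ)+5) * a^n) := by
    intro n
    rw [term18_zero, show (-2:ℂ) * (((n:ℂ)+1)*((n:ℂ)+5)) * x₁ * x₂^(n+5)
      = -(((((n:ℝ)+1)*((n:ℝ)+5)*2 : ℝ) : ℂ) * x₁ * x₂^(n+5)) from by push_cast; ring]
    rw [norm_neg, norm_mul, norm_mul, norm_pow, Complex.norm_real, Real.norm_eq_abs, ha, pow_add,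
      abs_of_nonneg (by positivity)]
    ring
  have habs1 : ∀ n : ℕ, ‖term18 x₁ x₂ (1, n)‖
      = (‖x₁‖^2 * a^5) * (((n:ℝ)+1)*((n:ℝ)+5)*((n:ℝ)+6) * a^n) := by
    intro n
    rw [term18_one, show (-1:ℂ) * (((n:ℂ)+1)*((n:ℂ)+5)*((n:ℂ)+6)) * x₁^2 * x₂^(n+5)
      = -(((((n:ℝ)+1)*((n:ℝ)+5)*((n:ℝ)+6) : ℝ) : ℂ) * x₁^2 * x₂^(n+5)) from by
        push_cast; ring]
    rw [norm_neg, norm_mul, norm_mul, norm_pow, norm_pow, Complex.norm_real, Real.norm_eq_abs, ha, pow_add,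
      abs_of_nonneg (by positivity)]
    ring
  have s0 : Summable (fun n : ℕ => ‖term18 x₁ x₂ (0, n)‖) := by
    have := ((rowA hxr).summable.mul_left (2 * ‖x₁‖ * a^5))
    exact this.congr fun n => (habs0 n).symm
  have s1 : Summable (fun n : ℕ => ‖term18 x₁ x₂ (1, n)‖) := by
    have := ((rowB hxr).summable.mul_left (‖x₁‖^2 * a^5))
    exact this.congr fun n => (habs1 n).symm
  have srow : ∀ b : Fin 2, Summable fun n : ℕ => ‖term18 x₁ x₂ (b, n)‖ := by
    intro b; fin_cases b
    · exact s0
    · exact s1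
  have sAbs : Summable (fun q : Fin 2 × ℕ => ‖term18 x₁ x₂ q‖) := by
    refine (summable_prod_of_nonneg fun q => norm_nonneg _).mpr ⟨srow, ?_⟩
    exact Summable.of_finite
  refine ⟨sAbs, ?_⟩
  have sTerm : Summable (term18 x₁ x₂) := by
    apply Summable.of_norm
    simpa using sAbs
  have hval : ∑' q, term18 x₁ x₂ q
      = (-2*x₁*x₂^5) * ((5 - 8*x₂ + 3*x₂^2)/(1-x₂)^4)
        + (-x₁^2*x₂^5) * ((30 - 36*x₂ + 12*x₂^2)/(1-x₂)^4) := by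
    rw [Summable.tsum_prod' sTerm (fun b => (sTerm.prod_factor b))]
    rw [tsum_fintype]
    rw [Fin.sum_univ_two, h0.tsum_eq, h1.tsum_eq]
  have hfin : (-2*x₁*x₂^5) * ((5 - 8*x₂ + 3*x₂^2)/(1-x₂)^4)
        + (-x₁^2*x₂^5) * ((30 - 36*x₂ + 12*x₂^2)/(1-x₂)^4)
      = (-2) * x₁ * x₂ ^ 5 *
          (6 * x₁ * x₂ ^ 2 - 18 * x₁ * x₂ + 3 * x₂ ^ 2 + 15 * x₁ - 8 * x₂ + 5) /
          (1 - x₂) ^ 4 := by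
    have h0' := one_sub_ne hx'
    field_simp
    ring
  have := sTerm.hasSum
  rw [hval, hfin] at this
  exact this
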